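/- For every x ∈ ℝ and every vector ψ ∈ ℂ³ with ‖ψ‖ = 1, x/2 is an eigenvalue of Λ_x(ψψ†): det(Λ_x(ψψ†) − (x/2)·I₃) = 0, where ψψ† denotes the outer product matrix with entries ψ_i·conj(ψ_j). -/

import Mathlib

open Matrix

/-- The interpolated Landau–Streater/Werner–Holevo channel
`Λ_x(ρ) = (1−x)·ρ + (x/2)·(Tr(ρ)·I₃ − ρᵀ)`. -/
noncomputable def Lam (x : ℝ) (ρ : Matrix (Fin 3) (Fin 3) ℂ) : Matrix (Fin 3) (Fin 3) ℂ :=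
  ((1 : ℂ) - (x : ℂ)) • ρ + ((x : ℂ) / 2) • (ρ.trace • (1 : Matrix (Fin 3) (Fin 3) ℂ) - ρᵀ)

/-- For every unit vector `ψ ∈ ℂ³`, the number `x/2` is an eigenvalue of
`Λ_x(ψψ†)`: the determinant of `Λ_x(ψψ†) − (x/2)·I₃` vanishes. -/
theorem lam_half_x_eigenvalue (x : ℝ) (ψ : EuclideanSpace ℂ (Fin 3)) (hψ : ‖ψ‖ = 1) :
    (Lam x (Matrix.vecMulVec (ψ : Fin 3 → ℂ) (star (ψ : Fin 3 → ℂ))) -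
        ((x : ℂ) / 2) • (1 : Matrix (Fin 3) (Fin 3) ℂ)).det = 0 := by
  have hip : (inner ℂ ψ ψ : ℂ) = 1 := by
    rw [inner_self_eq_norm_sq_to_K, hψ]; norm_num
  have h : starRingEnd ℂ (ψ 0) * ψ 0 + starRingEnd ℂ (ψ 1) * ψ 1 + starRingEnd ℂ (ψ 2) * ψ 2 = 1 := by
    rw [← hip, PiLp.inner_apply]
    simp [Fin.sum_univ_three, RCLike.inner_apply]
    rw [Complex.conj_mul', Complex.conj_mul', Complex.conj_mul']
  have ht : (Matrix.vecMulVec (ψ : Fin 3 → ℂ) (star (ψ : Fin 3 → ℂ))).trace = 1 := by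
    simp [Matrix.trace, Matrix.diag, vecMulVec_apply, Fin.sum_univ_three, Pi.star_apply]
    linear_combination h
  rw [Lam, ht]
  rw [det_fin_three]
  simp [vecMulVec_apply, Matrix.one_apply, Pi.star_apply, Matrix.transpose_apply]
  ring
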